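/- Let g be a finite-dimensional Lie algebra over a field of characteristic zero such that the derived subalgebra equals the centre and is one-dimensional ([g,g] = Z(g) and dim Z(g) = 1) and dim g ≥ 3 (e.g. the (2n+1)-dimensional Heisenberg algebra h_n for n ≥ 1). Then g admits no symmetric, invariant, nondegenerate bilinear form; i.e. g is not quadratic. -/

import Mathlib

/-- A finite-dimensional Lie algebra (over a field of characteristic zero) whose derived
subalgebra equals its centre and is one-dimensional, and which has dimension at least 3
(e.g. a Heisenberg algebra `h_n`, `n ≥ 1`), admits no symmetric invariant nondegenerate
bilinear form: it is not quadratic. -/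
theorem not_quadratic_of_derived_eq_center_one_dimensional
    {K : Type*} [Field K] [CharZero K]
    {L : Type*} [LieRing L] [LieAlgebra K L] [FiniteDimensional K L]
    (hdc : (⁅(⊤ : LieIdeal K L), (⊤ : LieIdeal K L)⁆ : LieIdeal K L) = LieAlgebra.center K L)
    (hdim1 : Module.finrank K (LieSubmodule.toSubmodule (LieAlgebra.center K L)) = 1)
    (hdim : 3 ≤ Module.finrank K L) :
    ¬ ∃ φ : L →ₗ[K] L →ₗ[K] K,
        (∀ x y : L, φ x y = φ y x)
        ∧ (∀ x : L, (∀ y : L, φ x y = 0) → x = 0)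
        ∧ (∀ x y z : L, φ ⁅x, y⁆ z = φ x ⁅y, z⁆) := by
  rintro ⟨φ, hsymm, hnd, hinv⟩
  set B : LinearMap.BilinForm K L := φ with hB
  set D : Submodule K L :=
    LieSubmodule.toSubmodule (⁅(⊤ : LieIdeal K L), (⊤ : LieIdeal K L)⁆ : LieIdeal K L) with hD
  have hndB : B.Nondegenerate :=
    (LinearMap.IsRefl.nondegenerate_iff_separatingLeft (B := B)
      (fun x y h => by rw [hsymm]; exact h)).mpr hnd
  have hrefl : B.IsRefl := fun x y h => by rw [hsymm]; exact h
  -- The orthogonal complement of D equals the center.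
  have horth : B.orthogonal D = LieSubmodule.toSubmodule (LieAlgebra.center K L) := by
    ext x
    rw [LinearMap.BilinForm.mem_orthogonal_iff]
    constructor
    · intro hx
      -- x is orthogonal to all brackets, hence all brackets with x vanish
      intro y
      have key : ∀ z : L, φ ⁅x, y⁆ z = 0 := by
        intro z
        rw [hinv]
        have hmem : ⁅y, z⁆ ∈ D := by
          rw [hD]
          exact LieSubmodule.lie_mem_lie (LieSubmodule.mem_top _) (LieSubmodule.mem_top _)
        rw [hsymm]
        exact hx _ hmem
      have h0 : ⁅x, y⁆ = 0 := hnd _ key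
      rw [← lie_skew, h0, neg_zero]
    · intro hx
      -- x central: φ ⟨bracket⟩ x = 0 on generators, extend by span
      intro n hn
      have hle : D ≤ LinearMap.ker (B.flip x) := by
        rw [hD, LieSubmodule.lieIdeal_oper_eq_linear_span']
        rw [Submodule.span_le]
        rintro _ ⟨a, -, b, -, rfl⟩
        simp only [SetLike.mem_coe, LinearMap.mem_ker, LinearMap.flip_apply]
        show (B ⁅a, b⁆) x = 0
        rw [hinv]
        have : ⁅b, x⁆ = 0 := (LieModule.mem_maxTrivSubmodule K L L x).mp hx b
        rw [this]
        simp
      have := hle hn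
      simpa [LinearMap.BilinForm.IsOrtho] using this
  have hDc : D = LieSubmodule.toSubmodule (LieAlgebra.center K L) := by rw [hD, hdc]
  have hfr := LinearMap.BilinForm.finrank_orthogonal hndB D
  rw [horth, ← hDc] at hfr
  rw [hDc, hdim1] at hfr
  omega
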